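/- Let C ⊆ E be a convex set, V ⊆ E a linear subspace with orthogonal projection π_V, and let v ∈ V be a nonzero vector that is sharp normal for C. Then v is sharp normal for π_V(C). -/

import Mathlib

open scoped Pointwise RealInnerProductSpace

variable {E : Type*} [NormedAddCommGroup E] [InnerProductSpace ℝ E] [FiniteDimensional ℝ E]

/-- `F` is a face of the convex set `C`: a convex subset of `C` such that whenever an open
segment between two points of `C` meets `F`, both endpoints belong to `F`. -/
def IsFace (C F : Set E) : Prop :=
  Convex ℝ F ∧ F ⊆ C ∧
    ∀ x ∈ C, ∀ y ∈ C, (openSegment ℝ x y ∩ F).Nonempty → x ∈ F ∧ y ∈ F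

/-- The exposed face `F⊥(C,u)` of `C` by the vector `u`: the points of `C` where `⟨u,·⟩`
attains its supremum over `C`. -/
def expFace (C : Set E) (u : E) : Set E :=
  {x ∈ C | ∀ y ∈ C, ⟪u, y⟫ ≤ ⟪u, x⟫}

/-- `F` is an exposed face of `C`: either `∅`, or `C`, or `F⊥(C,u)` for some nonzero `u`. -/
def IsExpFace (C F : Set E) : Prop :=
  F = ∅ ∨ F = C ∨ ∃ u : E, u ≠ 0 ∧ F = expFace C u

/-- The normal cone `N(C,x)` of `C` at the point `x`. -/
def normalCone (C : Set E) (x : E) : Set E :=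
  {u | ∀ y ∈ C, ⟪u, y - x⟫ ≤ 0}

/-- The normal cone `N(C,F)` of `C` at a subset `F`; for a nonempty convex `F ⊆ C` it agrees
with `normalCone C x` for any `x` in the relative interior of `F` (all these coincide), and
for `F = ∅` it is all of `E`. -/
def normalConeOf (C F : Set E) : Set E :=
  ⋂ x ∈ intrinsicInterior ℝ F, normalCone C x

/-- `N` is a normal cone of `C`: the normal cone of some face of `C`. -/
def IsNormalCone (C N : Set E) : Prop :=
  ∃ F, IsFace C F ∧ N = normalConeOf C F

/-- `T` is a touching cone of `C`: a nonempty face of a normal cone of `C`. -/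
def IsTouchingCone (C T : Set E) : Prop :=
  T.Nonempty ∧ ∃ N, IsNormalCone C N ∧ IsFace N T

/-- The positive hull of a set: all finite nonnegative combinations (`posHull ∅ = {0}`). -/
def posHull (S : Set E) : Set E :=
  {x | ∃ (k : ℕ) (c : Fin k → ℝ) (s : Fin k → E),
    (∀ i, 0 ≤ c i) ∧ (∀ i, s i ∈ S) ∧ x = ∑ i, c i • s i}

/-- A vector `u` is sharp normal for `C` if every `x ∈ ri(F⊥(C,u))` satisfies
`u ∈ ri(N(C,x))`. -/
def SharpNormal (C : Set E) (u : E) : Prop :=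
  ∀ x ∈ intrinsicInterior ℝ (expFace C u), u ∈ intrinsicInterior ℝ (normalCone C x)

/-- A point `x` is sharp exposed in `C` if every nonzero `u ∈ ri(N(C,x))` satisfies
`x ∈ ri(F⊥(C,u))`. -/
def SharpExposed (C : Set E) (x : E) : Prop :=
  ∀ u ∈ intrinsicInterior ℝ (normalCone C x), u ≠ 0 → x ∈ intrinsicInterior ℝ (expFace C u)

/-- The smallest exposed face of `C` containing `F`: the intersection of all exposed faces
of `C` containing `F`. -/
def supExp (C F : Set E) : Set E :=
  ⋂₀ {G | IsExpFace C G ∧ F ⊆ G}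

/-- The polar body of `K`. -/
def polarBody (K : Set E) : Set E := {u | ∀ y ∈ K, ⟪u, y⟫ ≤ 1}

set_option linter.unusedSectionVars false
set_option linter.unusedVariables false

lemma mem_ri_iff {s : Set E} {x : E} :
    x ∈ intrinsicInterior ℝ s ↔ x ∈ affineSpan ℝ s ∧
      ∃ ε > 0, ∀ z ∈ affineSpan ℝ s, dist z x < ε → z ∈ s := by
  rw [mem_intrinsicInterior]
  constructor
  · rintro ⟨⟨y, hy⟩, hyi, rfl⟩
    refine ⟨hy, ?_⟩
    rw [mem_interior_iff_mem_nhds, Metric.mem_nhds_iff] at hyi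
    obtain ⟨ε, hε, hball⟩ := hyi
    refine ⟨ε, hε, fun z hz hdz => ?_⟩
    exact hball (show (⟨z, hz⟩ : affineSpan ℝ s) ∈ Metric.ball _ ε by
      simpa [Metric.mem_ball, Subtype.dist_eq] using hdz)
  · rintro ⟨hx, ε, hε, h⟩
    refine ⟨⟨x, hx⟩, ?_, rfl⟩
    rw [mem_interior_iff_mem_nhds, Metric.mem_nhds_iff]
    exact ⟨ε, hε, fun z hz => h z z.2 (by simpa [Metric.mem_ball, Subtype.dist_eq] using hz)⟩

set_option linter.unusedSectionVars false

lemma ri_prolong {s : Set E} {x y : E} (hx : x ∈ intrinsicInterior ℝ s) (hy : y ∈ s) :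
    ∃ z ∈ s, x ∈ openSegment ℝ y z := by
  obtain ⟨hxspan, ε, hε, h⟩ := mem_ri_iff.1 hx
  rcases eq_or_ne y x with rfl | hne
  · exact ⟨y, hy, by rw [openSegment_same]; exact Set.mem_singleton _⟩
  · have hxy : (0:ℝ) < ‖x - y‖ := by
      rw [norm_pos_iff, sub_ne_zero]; exact hne.symm
    set δ : ℝ := ε / (2 * ‖x - y‖) with hδdef
    have hδ : 0 < δ := by positivity
    set z : E := x + δ • (x - y) with hzdef
    have hzspan : z ∈ affineSpan ℝ s := by
      have := AffineSubspace.smul_vsub_vadd_mem (affineSpan ℝ s) δ hxspan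
        (subset_affineSpan ℝ s hy) hxspan
      simpa [hzdef, vsub_eq_sub, vadd_eq_add, add_comm] using this
    have hzs : z ∈ s := by
      refine h z hzspan ?_
      have : dist z x = δ * ‖x - y‖ := by
        rw [dist_eq_norm, hzdef]
        simp [norm_smul, abs_of_pos hδ]
      rw [this, hδdef]
      rw [div_mul_eq_mul_div]
      rw [div_lt_iff₀ (by positivity)]
      nlinarith
    refine ⟨z, hzs, ⟨δ / (1 + δ), 1 / (1 + δ), by positivity, by positivity, ?_, ?_⟩⟩
    · field_simp; ring
    · rw [hzdef]
      match_scalars <;> (field_simp; try ring)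

lemma ri_segment {s : Set E} (hs : Convex ℝ s) {x z w : E} (hx : x ∈ intrinsicInterior ℝ s)
    (hz : z ∈ s) (hw : w ∈ openSegment ℝ x z) : w ∈ intrinsicInterior ℝ s := by
  obtain ⟨hxspan, ε, hε, h⟩ := mem_ri_iff.1 hx
  obtain ⟨a, b, ha, hb, hab, rfl⟩ := hw
  have hzspan : z ∈ affineSpan ℝ s := subset_affineSpan ℝ s hz
  refine mem_ri_iff.2 ⟨?_, a * ε, by positivity, fun u huspan hdu => ?_⟩
  · have := AffineSubspace.smul_vsub_vadd_mem (affineSpan ℝ s) b hzspan hxspan hxspan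
    have heq : b • (z -ᵥ x) +ᵥ x = a • x + b • z := by
      rw [vsub_eq_sub, vadd_eq_add]
      match_scalars <;> linarith
    rwa [heq] at this
  · set p : E := a⁻¹ • (u - b • z) with hpdef
    have hpspan : p ∈ affineSpan ℝ s := by
      have := AffineSubspace.smul_vsub_vadd_mem (affineSpan ℝ s) a⁻¹ huspan hzspan hzspan
      have heq : a⁻¹ • (u -ᵥ z) +ᵥ z = p := by
        rw [vsub_eq_sub, vadd_eq_add, hpdef]
        match_scalars <;> field_simp <;> linarith
      rwa [heq] at this
    have hps : p ∈ s := by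
      refine h p hpspan ?_
      have : dist p x = a⁻¹ * dist u (a • x + b • z) := by
        rw [dist_eq_norm, dist_eq_norm, hpdef, ← norm_smul_of_nonneg (by positivity : (0:ℝ) ≤ a⁻¹)]
        congr 1
        match_scalars <;> (field_simp; try ring)
      rw [this]
      calc a⁻¹ * dist u (a • x + b • z) < a⁻¹ * (a * ε) := by
            exact mul_lt_mul_of_pos_left hdu (by positivity)
        _ = ε := by field_simp
    have : a • p + b • z = u := by
      rw [hpdef]; match_scalars <;> (field_simp; try ring)
    rw [← this]
    exact hs hps hz ha.le hb.le hab

lemma convex_expFace {C : Set E} (hC : Convex ℝ C) (u : E) : Convex ℝ (expFace C u) := by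
  intro x hx y hy a b ha hb hab
  refine ⟨hC hx.1 hy.1 ha hb hab, fun w hw => ?_⟩
  have h1 := hx.2 w hw
  have h2 := hy.2 w hw
  rw [inner_add_right, real_inner_smul_right, real_inner_smul_right]
  have h3 : a * (inner ℝ u w : ℝ) + b * inner ℝ u w = inner ℝ u w := by rw [← add_mul, hab, one_mul]
  linarith [mul_le_mul_of_nonneg_left h1 ha, mul_le_mul_of_nonneg_left h2 hb]

/-- If a nonzero vector `v ∈ V` is sharp normal for a convex set `C`,
then `v` is sharp normal for `π_V(C)`. -/
theorem stmt_11 (C : Set E) (hC : Convex ℝ C) (V : Submodule ℝ E)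
    (v : E) (hvV : v ∈ V) (hv : v ≠ 0) (hsn : SharpNormal C v) :
    SharpNormal ((fun z : E => (Submodule.orthogonalProjection V z : E)) '' C) v := by
  set P : E → E := fun z : E => (Submodule.orthogonalProjection V z : E) with hPdef
  set D : Set E := P '' C with hDdef
  have hPv : P v = v := by
    have := Submodule.orthogonalProjectionOnto_mem_subspace_eq_self (K := V) ⟨v, hvV⟩
    simp only [hPdef, this]
  have hPadd : ∀ x y : E, P (x + y) = P x + P y := fun x y => by simp [hPdef]
  have hPsmul : ∀ (c : ℝ) (x : E), P (c • x) = c • P x := fun c x => by simp [hPdef]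
  have hPsub : ∀ x y : E, P (x - y) = P x - P y := fun x y => by simp [hPdef]
  have hinner : ∀ z : E, ⟪v, P z⟫ = ⟪v, z⟫ := by
    intro z
    have h := Submodule.sub_starProjection_mem_orthogonal (K := V) z
    have h' : ⟪v, z - P z⟫ = 0 := (Submodule.mem_orthogonal V _).1 h v hvV
    rw [inner_sub_right] at h'
    linarith
  have hadj : ∀ u w : E, ⟪u, P w⟫ = ⟪P u, w⟫ := fun u w =>
    (Submodule.inner_starProjection_left_eq_right V u w).symm
  have hF' : expFace D v = P '' (expFace C v) := by
    ext x'
    constructor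
    · rintro ⟨⟨x, hxC, rfl⟩, hmax⟩
      refine ⟨x, ⟨hxC, fun y hy => ?_⟩, rfl⟩
      have := hmax (P y) ⟨y, hy, rfl⟩
      rwa [hinner, hinner] at this
    · rintro ⟨x, ⟨hxC, hmax⟩, rfl⟩
      refine ⟨⟨x, hxC, rfl⟩, ?_⟩
      rintro y' ⟨y, hy, rfl⟩
      rw [hinner, hinner]
      exact hmax y hy
  intro x' hx'
  set F : Set E := expFace C v with hFdef
  have hx'F' : x' ∈ expFace D v := intrinsicInterior_subset hx'
  have hFne : F.Nonempty := by
    rw [hF'] at hx'F'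
    obtain ⟨x, hx, _⟩ := hx'F'
    exact ⟨x, hx⟩
  have hFconv : Convex ℝ F := convex_expFace hC v
  obtain ⟨x₀, hx₀⟩ := hFne.intrinsicInterior hFconv
  have hPx₀ : P x₀ ∈ expFace D v := by
    rw [hF']
    exact ⟨x₀, intrinsicInterior_subset hx₀, rfl⟩
  obtain ⟨z', hz'F', hseg⟩ := ri_prolong hx' hPx₀
  rw [hF'] at hz'F'
  obtain ⟨z, hzF, rfl⟩ := hz'F'
  obtain ⟨a, b, ha, hb, hab, hcomb⟩ := hseg
  set x₁ : E := a • x₀ + b • z with hx₁def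
  have hx₁ri : x₁ ∈ intrinsicInterior ℝ F := ri_segment hFconv hx₀ hzF ⟨a, b, ha, hb, hab, rfl⟩
  have hPx₁ : P x₁ = x' := by
    rw [← hcomb, hx₁def, hPadd, hPsmul, hPsmul]
  have hvN := hsn x₁ hx₁ri
  set N : Set E := normalCone C x₁ with hNdef
  set M : Set E := normalCone D x' with hMdef
  have hkey : ∀ u y : E, ⟪u, P y - x'⟫ = ⟪P u, y - x₁⟫ := by
    intro u y
    rw [← hPx₁, ← hPsub, hadj]
  have hMN : ∀ u : E, u ∈ M ↔ P u ∈ N := by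
    intro u
    constructor
    · intro hu y hy
      have h1 := hu (P y) ⟨y, hy, rfl⟩
      rwa [hkey] at h1
    · rintro hu y' ⟨y, hy, rfl⟩
      rw [hkey]
      exact hu y hy
  have hvNmem : v ∈ N := intrinsicInterior_subset hvN
  have hvM : v ∈ M := (hMN v).2 (by rwa [hPv])
  obtain ⟨hvspanN, ε, hε, hN⟩ := mem_ri_iff.1 hvN
  refine mem_ri_iff.2 ⟨subset_affineSpan ℝ M hvM, ε, hε, fun u huspan hdu => ?_⟩
  apply (hMN u).2
  have himg : P '' M ⊆ N := by
    rintro w ⟨u', hu', rfl⟩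
    exact (hMN u').1 hu'
  set L : E →ₗ[ℝ] E := V.subtype.comp (Submodule.orthogonalProjection V).toLinearMap with hLdef
  have hLP : ∀ z : E, L.toAffineMap z = P z := fun z => rfl
  refine hN (P u) ?_ ?_
  · have hmem : P u ∈ (affineSpan ℝ M).map L.toAffineMap := ⟨u, huspan, hLP u⟩
    rw [AffineSubspace.map_span] at hmem
    have himg' : L.toAffineMap '' M ⊆ N := by
      rwa [show L.toAffineMap '' M = P '' M from rfl]
    exact affineSpan_mono ℝ himg' hmem
  · have hle : ‖P (u - v)‖ ≤ ‖u - v‖ := by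
      have h1 := ContinuousLinearMap.le_opNorm (Submodule.orthogonalProjection V) (u - v)
      have h2 := Submodule.orthogonalProjectionOnto_norm_le V
      have h3 : ‖P (u - v)‖ = ‖Submodule.orthogonalProjection V (u - v)‖ := by simp [hPdef]
      rw [h3]
      nlinarith [norm_nonneg (u - v)]
    calc dist (P u) v = ‖P (u - v)‖ := by rw [dist_eq_norm, hPsub, hPv]
      _ ≤ ‖u - v‖ := hle
      _ < ε := by rwa [dist_eq_norm] at hdu
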